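/- arXiv:1411.1305 — 8 statements merged into one kernel-verified Lean document; each statement's English description precedes it below -/
import Mathlib

section
/- Let P be a finite poset with a least element. If x ∨ y (the join) exists whenever x and y both cover a common element, and P has a greatest element, then P is a lattice. -/
theorem finite_poset_local_joins_lattice {P : Type*} [PartialOrder P] [Fintype P]
    [OrderBot P] [OrderTop P]
    (h : ∀ a x y : P, a ⋖ x → a ⋖ y → ∃ j, IsLUB {x, y} j) :
    ∀ x y : P, (∃ j, IsLUB {x, y} j) ∧ ∃ m, IsGLB {x, y} m := by
  classical
  -- Step 1: pairwise joins exist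
  have aux : ∀ a x y : P, a ≤ x → a ≤ y → ∃ j, IsLUB {x, y} j := by
    intro a
    induction a using WellFoundedGT.induction with
    | _ a ih =>
      intro x y hax hay
      rcases hax.lt_or_eq with hax | rfl
      · rcases hay.lt_or_eq with hay | rfl
        · obtain ⟨x', hx'c, hx'⟩ := hax.exists_covby_le
          obtain ⟨y', hy'c, hy'⟩ := hay.exists_covby_le
          obtain ⟨j, hj⟩ := h a x' y' hx'c hy'c
          have hjx' : x' ≤ j := hj.1 (by simp)
          have hjy' : y' ≤ j := hj.1 (by simp)
          obtain ⟨u, hu⟩ := ih x' hx'c.lt x j hx' hjx'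
          have hux : x ≤ u := hu.1 (by simp)
          have huj : j ≤ u := hu.1 (by simp)
          obtain ⟨w, hw⟩ := ih y' hy'c.lt u y (hjy'.trans huj) hy'
          refine ⟨w, ⟨?_, ?_⟩⟩
          · rintro z (rfl | rfl)
            · exact hux.trans (hw.1 (by simp))
            · exact hw.1 (by simp)
          · intro z hz
            have hzx : x ≤ z := hz (by simp)
            have hzy : y ≤ z := hz (by simp)
            have hzj : j ≤ z := hj.2 (by rintro t (rfl | rfl)
                                         exacts [hx'.trans hzx, hy'.trans hzy])
            have hzu : u ≤ z := hu.2 (by rintro t (rfl | rfl); exacts [hzx, hzj])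
            exact hw.2 (by rintro t (rfl | rfl); exacts [hzu, hzy])
        · exact ⟨x, ⟨by rintro z (rfl | rfl); exacts [le_rfl, hax.le],
            fun z hz => hz (by simp)⟩⟩
      · exact ⟨y, ⟨by rintro z (rfl | rfl); exacts [hay, le_rfl],
          fun z hz => hz (by simp)⟩⟩
  have join : ∀ x y : P, ∃ j, IsLUB {x, y} j := fun x y => aux ⊥ x y bot_le bot_le
  -- Step 2: LUBs of finite sets exist
  have fin_lub : ∀ s : Finset P, ∃ j, IsLUB (↑s : Set P) j := by
    intro s
    induction s using Finset.induction with
    | empty => exact ⟨⊥, by simp [(isLUB_empty : IsLUB (∅ : Set P) ⊥)]⟩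
    | insert _ _ ha ih =>
      rename_i a s
      obtain ⟨j, hj⟩ := ih
      obtain ⟨k, hk⟩ := join a j
      refine ⟨k, ⟨?_, ?_⟩⟩
      · rintro z hz
        rcases Finset.mem_insert.mp (by exact_mod_cast hz) with rfl | hz
        · exact hk.1 (by simp)
        · exact (hj.1 hz).trans (hk.1 (by simp))
      · intro z hz
        have h1 : a ≤ z := hz (by simp)
        have h2 : j ≤ z := hj.2 fun t ht => hz (by simpa using Or.inr ht)
        exact hk.2 (by rintro t (rfl | rfl); exacts [h1, h2])
  intro x y
  refine ⟨join x y, ?_⟩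
  classical
  set S : Finset P := Finset.univ.filter (fun z => z ≤ x ∧ z ≤ y) with hS
  obtain ⟨m, hm⟩ := fin_lub S
  have memS : ∀ z : P, z ∈ S ↔ z ≤ x ∧ z ≤ y := by
    intro z; simp [hS]
  refine ⟨m, ⟨?_, ?_⟩⟩
  · rintro z (rfl | rfl)
    · exact hm.2 fun t ht => ((memS t).mp (by exact_mod_cast ht)).1
    · exact hm.2 fun t ht => ((memS t).mp (by exact_mod_cast ht)).2
  · intro z hz
    exact hm.1 (by exact_mod_cast (memS z).mpr ⟨hz (by simp), hz (by simp)⟩)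
end

section
/- Let A be a real central hyperplane arrangement with fixed chamber c₀, and order chambers by c ≤ d iff S(c₀,c) ⊆ S(c₀,d). Then this chamber poset is graded with rank function c ↦ |S(c₀,c)|: whenever c < d there is a chamber c' with c ≤ c' ≤ d and |S(c₀,c')| = |S(c₀,c)| + 1; moreover the poset is bounded with minimum c₀ and maximum the chamber −c₀ opposite to c₀. -/
open Matrix
open scoped Classical

/-- Ambient space: `ℝⁿ`. -/
abbrev V (n : ℕ) := Fin n → ℝ

/-- The linear functional `x ↦ v ⬝ᵥ x` determined by a normal vector. -/
def hypl {n : ℕ} (v : V n) : V n →ₗ[ℝ] ℝ where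
  toFun x := v ⬝ᵥ x
  map_add' x y := by simp [dotProduct_add]
  map_smul' c x := by simp [dotProduct_smul]

/-- Two normal vectors define the same hyperplane. -/
def SameHyp {n : ℕ} (u w : V n) : Prop := ∀ x, u ⬝ᵥ x = 0 ↔ w ⬝ᵥ x = 0

/-- A finite set of normal vectors represents a (central) hyperplane arrangement
if each normal is nonzero and distinct normals define distinct hyperplanes. -/
def IsArrangement {n : ℕ} (A : Finset (V n)) : Prop :=
  (∀ v ∈ A, v ≠ 0) ∧ ∀ u ∈ A, ∀ w ∈ A, SameHyp u w → u = w

/-- The point `x` realizes the sign vector `c` on the arrangement `A`. -/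
def Realizes {n : ℕ} (A : Finset (V n)) (c : V n → Bool) (x : V n) : Prop :=
  ∀ v ∈ A, if c v then 0 < v ⬝ᵥ x else v ⬝ᵥ x < 0

/-- A chamber of `A`, encoded by its sign vector. -/
def IsChamber {n : ℕ} (A : Finset (V n)) (c : V n → Bool) : Prop :=
  ∃ x, Realizes A c x

/-- The separation set of two chambers: hyperplanes on which their signs differ. -/
noncomputable def SepSet {n : ℕ} (A : Finset (V n)) (c d : V n → Bool) : Finset (V n) :=
  A.filter (fun v => c v ≠ d v)

/-- The localization of `A` at the subspace `ker u ∩ ker w`: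
hyperplanes containing this subspace. -/
noncomputable def loc {n : ℕ} (A : Finset (V n)) (u w : V n) : Finset (V n) :=
  A.filter (fun v => ∀ x, u ⬝ᵥ x = 0 → w ⬝ᵥ x = 0 → v ⬝ᵥ x = 0)

/-- `u, w` span a codimension-2 intersection subspace `ker u ∩ ker w` of `A`. -/
def Codim2 {n : ℕ} (A : Finset (V n)) (u w : V n) : Prop :=
  u ∈ A ∧ w ∈ A ∧ LinearIndependent ℝ ![u, w]

/-- `I` is biclosed w.r.t. the chamber `c₀`: its intersection with each rank-2
localization is the separation set of some chamber of the localization. -/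
def IsBiclosed {n : ℕ} (A : Finset (V n)) (c₀ : V n → Bool) (I : Finset (V n)) : Prop :=
  ∀ u w, Codim2 A u w →
    ∃ d, IsChamber (loc A u w) d ∧ I ∩ loc A u w = SepSet (loc A u w) c₀ d

/-- `I ⊆ A` is convex with respect to `c₀`. -/
def IsConvex {n : ℕ} (A : Finset (V n)) (c₀ : V n → Bool) (I : Finset (V n)) : Prop :=
  ∀ H ∈ A \ I, ∃ e, IsChamber A e ∧ H ∈ SepSet A c₀ e ∧ SepSet A c₀ e ⊆ A \ I

/-- `I` is 2-closed: its intersection with each rank-2 localization is convex there. -/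
def Is2Closed {n : ℕ} (A : Finset (V n)) (c₀ : V n → Bool) (I : Finset (V n)) : Prop :=
  ∀ u w, Codim2 A u w → IsConvex (loc A u w) c₀ (I ∩ loc A u w)

/-- `v` is a wall of the chamber `c`: some point of the closure of `c` lies on the
hyperplane of `v` and strictly off every other hyperplane of `A`. -/
def IsWall {n : ℕ} (A : Finset (V n)) (c : V n → Bool) (v : V n) : Prop :=
  v ∈ A ∧ ∃ x, v ⬝ᵥ x = 0 ∧ ∀ w ∈ A, ¬ SameHyp v w →
    (if c w then 0 < w ⬝ᵥ x else w ⬝ᵥ x < 0)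

/-- The sign vector `v` is feasible: some point satisfies all its strict constraints. -/
def Feasible {n : ℕ} (A : Finset (V n)) (v : V n → SignType) : Prop :=
  ∃ x : V n, ∀ h ∈ A, (v h = 1 → 0 < h ⬝ᵥ x) ∧ (v h = -1 → h ⬝ᵥ x < 0)

/-- A circuit of `A`: a minimal nonzero infeasible sign vector supported on `A`. -/
def IsCircuit {n : ℕ} (A : Finset (V n)) (v : V n → SignType) : Prop :=
  (∀ h, v h ≠ 0 → h ∈ A) ∧ (∃ h, v h ≠ 0) ∧ ¬ Feasible A v ∧
    ∀ w : V n → SignType, (∀ h, w h ≠ 0 → w h = v h) →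
      {h | w h ≠ 0} ⊂ {h | v h ≠ 0} → Feasible A w

/-- A reduced gallery from `c₀` to `-c₀` in `A`, crossing hyperplanes `H 0, H 1, …`
in order. -/
def IsGallery {n N : ℕ} (A : Finset (V n)) (c₀ : V n → Bool) (H : Fin N → V n)
    (d : Fin (N + 1) → V n → Bool) : Prop :=
  (∀ i, IsChamber A (d i)) ∧ d 0 = c₀ ∧ (∀ v ∈ A, d (Fin.last N) v = !c₀ v) ∧
    ∀ i : Fin N, SepSet A (d i.castSucc) (d i.succ) = {H i}

/-- The enumeration `H` of `A` is admissible: on every rank-2 localization, the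
induced order is the crossing order of some reduced gallery of the localization. -/
def Admissible {n N : ℕ} (A : Finset (V n)) (c₀ : V n → Bool) (H : Fin N → V n) : Prop :=
  ∀ u w, Codim2 A u w →
    ∃ (M : ℕ) (G : Fin M → V n) (e : Fin (M + 1) → V n → Bool) (φ : Fin M → Fin N),
      IsGallery (loc A u w) c₀ G e ∧ StrictMono φ ∧ ∀ k, G k = H (φ k)

/-- The intersection lattice of `A`, as a set of subspaces of `ℝⁿ`. -/
def InterLattice {n : ℕ} (A : Finset (V n)) : Set (Submodule ℝ (V n)) :=
  {X | ∃ S : Finset (V n), S ⊆ A ∧ X = S.inf (fun v => LinearMap.ker (hypl v))}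

/-- A modular element of the intersection lattice of `A`. -/
def IsModular {n : ℕ} (A : Finset (V n)) (X : Submodule ℝ (V n)) : Prop :=
  X ∈ InterLattice A ∧ ∀ Y ∈ InterLattice A, X ⊔ Y ∈ InterLattice A

/-- The rank of the arrangement `A`. -/
noncomputable def rankA {n : ℕ} (A : Finset (V n)) : ℕ :=
  Module.finrank ℝ (Submodule.span ℝ (A : Set (V n)))

/-- A modular flag: a maximal chain `⊤ = X 0 > X 1 > ⋯ > X r` of modular
elements of the intersection lattice, with `X i` of codimension `i`. -/
def IsModularFlag {n : ℕ} (A : Finset (V n)) (X : Fin (rankA A + 1) → Submodule ℝ (V n)) : Prop :=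
  X 0 = ⊤ ∧ (∀ i, IsModular A (X i)) ∧ (∀ i j, i ≤ j → X j ≤ X i) ∧
    ∀ i : Fin (rankA A + 1), Module.finrank ℝ (X i) = n - (i : ℕ)

/-- `A` is supersolvable: its intersection lattice has a modular flag. -/
def IsSupersolvable {n : ℕ} (A : Finset (V n)) : Prop :=
  ∃ X : Fin (rankA A + 1) → Submodule ℝ (V n), IsModularFlag A X

/-- The chamber `c` is incident to the subspace `X`:  some point of `X` lies in the
closure of `c` and strictly off every hyperplane of `A` not containing `X`. -/
def IncidentSub {n : ℕ} (A : Finset (V n)) (c : V n → Bool) (X : Submodule ℝ (V n)) : Prop :=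
  ∃ x, x ∈ X ∧ ∀ v ∈ A, ¬ X ≤ LinearMap.ker (hypl v) →
    (if c v then 0 < v ⬝ᵥ x else v ⬝ᵥ x < 0)

/-- The chamber `c` is incident to the codimension-2 subspace `ker u ∩ ker w`. -/
def IncidentLoc {n : ℕ} (A : Finset (V n)) (c : V n → Bool) (u w : V n) : Prop :=
  ∃ x, (∀ v ∈ loc A u w, v ⬝ᵥ x = 0) ∧ ∀ v ∈ A, v ∉ loc A u w →
    (if c v then 0 < v ⬝ᵥ x else v ⬝ᵥ x < 0)

/-- `(A, c₀)` is bineighborly: any chamber is incident to the intersection of any two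
of its walls separating it from `-c₀`. -/
def Bineighborly {n : ℕ} (A : Finset (V n)) (c₀ : V n → Bool) : Prop :=
  ∀ c, IsChamber A c → ∀ u w, IsWall A c u → IsWall A c w →
    u ∈ SepSet A c (fun v => !c₀ v) → w ∈ SepSet A c (fun v => !c₀ v) → IncidentLoc A c u w

/-- Every chamber of `A` is a simplicial cone: its walls are linearly independent
and span the same subspace as `A`. -/
def IsSimplicial {n : ℕ} (A : Finset (V n)) : Prop :=
  ∀ c, IsChamber A c →
    LinearIndependent ℝ ((↑) : {v // IsWall A c v} → V n) ∧
      Submodule.span ℝ {v | IsWall A c v} = Submodule.span ℝ (A : Set (V n))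


open MeasureTheory in
lemma exists_generic {n : ℕ} (C : Set (V n)) (hC : IsOpen C) (x : V n) (hx : x ∈ C)
    (F : Finset (V n)) (hF : ∀ z ∈ F, z ≠ 0) :
    ∃ x' ∈ C, ∀ z ∈ F, z ⬝ᵥ x' ≠ 0 := by
  obtain ⟨r, hr, hball⟩ := Metric.isOpen_iff.1 hC x hx
  set K : Set (V n) := ⋃ z ∈ F, (LinearMap.ker (hypl z) : Set (V n)) with hKdef
  have hK : volume K = 0 := by
    refine (measure_biUnion_finset_le _ _).trans_eq ?_ |>.antisymm zero_le
    have h0 : ∀ z ∈ F, volume (LinearMap.ker (hypl z) : Set (V n)) = 0 := by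
      intro z hz
      apply Measure.addHaar_submodule
      intro h
      have hm : z ∈ LinearMap.ker (hypl z) := by rw [h]; trivial
      have h2 : z ⬝ᵥ z = 0 := hm
      exact hF z hz (by simpa [dotProduct_self_eq_zero] using h2)
    rw [Finset.sum_congr rfl h0, Finset.sum_const_zero]
  have hns : ¬ Metric.ball x r ⊆ K := by
    intro h
    have : volume (Metric.ball x r) = 0 :=
      le_antisymm ((measure_mono h).trans_eq hK) zero_le
    exact absurd this (Metric.measure_ball_pos volume x hr).ne'
  obtain ⟨x', hx', hxK⟩ := Set.not_subset.1 hns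
  refine ⟨x', hball hx', fun z hz hzx => hxK ?_⟩
  exact Set.mem_biUnion hz hzx

lemma chamber_isOpen {n : ℕ} (A : Finset (V n)) (c : V n → Bool) :
    IsOpen {x | Realizes A c x} := by
  have : {x | Realizes A c x} =
      ⋂ v ∈ A, {x : V n | if c v then 0 < v ⬝ᵥ x else v ⬝ᵥ x < 0} := by
    ext x; simp [Realizes, Set.mem_iInter]
  rw [this]
  refine isOpen_biInter_finset fun v hv => ?_
  have hcont : Continuous (fun x : V n => v ⬝ᵥ x) :=
    (hypl v).continuous_of_finiteDimensional
  by_cases h : c v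
  · simpa [h] using isOpen_lt continuous_const hcont
  · simpa [h] using isOpen_lt hcont continuous_const

lemma sub_ne_of_mul_neg {a b : ℝ} (h : a * b < 0) : a - b ≠ 0 := by
  intro he
  rw [sub_eq_zero] at he
  subst he
  nlinarith [mul_self_nonneg a]

lemma tv_mem {a b : ℝ} (h : a * b < 0) : 0 < a / (a - b) ∧ a / (a - b) < 1 := by
  rcases lt_or_gt_of_ne (show a ≠ 0 from fun ha => by simp [ha] at h) with ha | ha
  · have hb : 0 < b := by nlinarith
    have hs : a - b < 0 := by linarith
    have h1 : 0 < a / (a - b) := div_pos_of_neg_of_neg ha hs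
    refine ⟨h1, ?_⟩
    rw [div_lt_one_iff]
    exact Or.inr (Or.inr ⟨hs, by linarith⟩)
  · have hb : b < 0 := by nlinarith
    have hs : 0 < a - b := by linarith
    exact ⟨div_pos ha hs, (div_lt_one hs).2 (by linarith)⟩

lemma key_identity (a b t : ℝ) (h : a - b ≠ 0) :
    a * (a + t * (b - a)) = (a / (a - b)) * ((a - b) ^ 2) * (a / (a - b) - t) := by
  field_simp
  ring

lemma cross_lt {a b t : ℝ} (h : a * b < 0) (ht : t < a / (a - b)) :
    0 < a * (a + t * (b - a)) := by
  have hs := sub_ne_of_mul_neg h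
  rw [key_identity a b t hs]
  have h1 := (tv_mem h).1
  have h2 : (0:ℝ) < (a - b) ^ 2 := by positivity
  have h3 : 0 < a / (a - b) - t := by linarith
  positivity

lemma cross_gt {a b t : ℝ} (h : a * b < 0) (ht : a / (a - b) < t) :
    a * (a + t * (b - a)) < 0 := by
  have hs := sub_ne_of_mul_neg h
  rw [key_identity a b t hs]
  have h1 := (tv_mem h).1
  have h2 : (0:ℝ) < (a - b) ^ 2 := by positivity
  have h3 : a / (a - b) - t < 0 := by linarith
  exact mul_neg_of_pos_of_neg (by positivity) h3

lemma same_sign {a b t : ℝ} (h : 0 < a * b) (ht0 : 0 ≤ t) (ht1 : t ≤ 1) :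
    0 < a * (a + t * (b - a)) := by
  have ha : a ≠ 0 := fun ha => by simp [ha] at h
  have ha2 : 0 < a ^ 2 := by positivity
  nlinarith [mul_nonneg ht0 h.le, mul_nonneg (sub_nonneg.2 ht1) ha2.le]

theorem chamber_poset_graded_bounded {n : ℕ} (A : Finset (V n)) (hA : IsArrangement A)
    (c₀ : V n → Bool) (hc₀ : IsChamber A c₀) :
    (∀ c d, IsChamber A c → IsChamber A d → SepSet A c₀ c ⊂ SepSet A c₀ d →
      ∃ e, IsChamber A e ∧ SepSet A c₀ c ⊆ SepSet A c₀ e ∧ SepSet A c₀ e ⊆ SepSet A c₀ d ∧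
        (SepSet A c₀ e).card = (SepSet A c₀ c).card + 1) ∧
    SepSet A c₀ c₀ = ∅ ∧
    IsChamber A (fun v => !c₀ v) ∧ SepSet A c₀ (fun v => !c₀ v) = A := by
  classical
  obtain ⟨x₀, hx₀⟩ := hc₀
  refine ⟨?_, ?_, ?_, ?_⟩
  · intro c d hc hd hss
    obtain ⟨y, hy⟩ := hd
    obtain ⟨x, hx⟩ := hc
    set b : V n → ℝ := fun v => v ⬝ᵥ y with hbdef
    set zf : V n → V n → V n := fun u w => (b w) • u - (b u) • w with hzfdef
    have hbne : ∀ v ∈ A, b v ≠ 0 := by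
      intro v hv
      have := hy v hv
      by_cases h : d v <;> simp [h] at this <;> simp [hbdef] <;> intro hh <;>
        rw [hh] at this <;> exact lt_irrefl _ this
    set F : Finset (V n) :=
      ((A ×ˢ A).filter (fun p => p.1 ≠ p.2)).image (fun p => zf p.1 p.2) with hFdef
    have hFne : ∀ z ∈ F, z ≠ 0 := by
      intro z hz
      simp only [hFdef, Finset.mem_image, Finset.mem_filter, Finset.mem_product] at hz
      obtain ⟨⟨u, w⟩, ⟨⟨huA, hwA⟩, huw⟩, rfl⟩ := hz
      intro h0
      have heq : (b w) • u = (b u) • w := by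
        have := sub_eq_zero.1 h0
        simpa [hzfdef] using this
      have hbw := hbne w hwA
      have hbu := hbne u huA
      have hu : u = (b u / b w) • w := by
        have h1 : (b w)⁻¹ • (b w • u) = (b w)⁻¹ • (b u • w) := by rw [heq]
        rw [smul_smul, smul_smul, inv_mul_cancel₀ hbw, one_smul] at h1
        rw [div_eq_inv_mul]
        exact h1
      have hsame : SameHyp u w := by
        intro p
        rw [hu, smul_dotProduct, smul_eq_mul]
        constructor
        · intro h
          rcases mul_eq_zero.1 h with h | h
          · exact absurd h (div_ne_zero hbu hbw)
          · exact h
        · intro h; rw [h, mul_zero]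
      exact huw (hA.2 u huA w hwA hsame)
    obtain ⟨x', hx', hx'F⟩ := exists_generic {p | Realizes A c p}
      (chamber_isOpen A c) x hx F hFne
    set a : V n → ℝ := fun v => v ⬝ᵥ x' with hadef
    have hane : ∀ v ∈ A, a v ≠ 0 := by
      intro v hv
      have := hx' v hv
      by_cases h : c v <;> simp [h] at this <;> simp [hadef] <;> intro hh <;>
        rw [hh] at this <;> exact lt_irrefl _ this
    set S : Finset (V n) := A.filter (fun v => c v ≠ d v) with hSdef
    have hSsub : S ⊆ A := Finset.filter_subset _ _
    have hSopp : ∀ v ∈ S, a v * b v < 0 := by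
      intro v hv
      rw [hSdef, Finset.mem_filter] at hv
      obtain ⟨hvA, hcd⟩ := hv
      have h1 := hx' v hvA
      have h2 := hy v hvA
      by_cases h : c v
      · have hd' : d v = false := by
          cases hdv : d v
          · rfl
          · exact absurd (hdv ▸ h ▸ rfl : c v = d v) hcd
        simp [h] at h1; simp [hd'] at h2
        exact mul_neg_of_pos_of_neg h1 h2
      · have hd' : d v = true := by
          cases hdv : d v
          · exact absurd (by simp [hdv, Bool.eq_false_iff.2 h] : c v = d v) hcd
          · rfl
        simp [h] at h1; simp [hd'] at h2
        exact mul_neg_of_neg_of_pos h1 h2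
    have hnotS : ∀ v ∈ A, v ∉ S → 0 < a v * b v := by
      intro v hvA hvS
      rw [hSdef, Finset.mem_filter] at hvS
      have hcd : c v = d v := by
        by_contra h
        exact hvS ⟨hvA, h⟩
      have h1 := hx' v hvA
      have h2 := hy v hvA
      rw [hcd] at h1
      by_cases h : d v
      · simp [h] at h1 h2; exact mul_pos h1 h2
      · simp [h] at h1 h2; exact mul_pos_of_neg_of_neg h1 h2
    set t : V n → ℝ := fun v => a v / (a v - b v) with htdef
    have htv : ∀ v ∈ S, 0 < t v ∧ t v < 1 := fun v hv => tv_mem (hSopp v hv)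
    have hdist : ∀ u ∈ S, ∀ w ∈ S, u ≠ w → t u ≠ t w := by
      intro u hu w hw huw he
      have hu' := sub_ne_of_mul_neg (hSopp u hu)
      have hw' := sub_ne_of_mul_neg (hSopp w hw)
      have hcross : a u * (a w - b w) = a w * (a u - b u) :=
        (div_eq_div_iff hu' hw').1 he
      have hz : zf u w ⬝ᵥ x' = 0 := by
        simp only [hzfdef, sub_dotProduct, smul_dotProduct, smul_eq_mul]
        have : b w * (u ⬝ᵥ x') = b w * a u := rfl
        nlinarith [hcross]
      exact hx'F (zf u w) (by
        simp only [hFdef, Finset.mem_image, Finset.mem_filter, Finset.mem_product]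
        exact ⟨(u, w), ⟨⟨hSsub hu, hSsub hw⟩, huw⟩, rfl⟩) hz
    have hSne : S.Nonempty := by
      obtain ⟨v0, hv0d, hv0c⟩ := Finset.exists_of_ssubset hss
      rw [SepSet, Finset.mem_filter] at hv0d
      have hv0A := hv0d.1
      have hc0c : c₀ v0 = c v0 := by
        by_contra h
        exact hv0c (Finset.mem_filter.2 ⟨hv0A, h⟩)
      refine ⟨v0, Finset.mem_filter.2 ⟨hv0A, ?_⟩⟩
      rw [← hc0c]
      exact hv0d.2
    obtain ⟨vs, hvsS, hvsmin⟩ := S.exists_min_image t hSne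
    have hvsA : vs ∈ A := hSsub hvsS
    set M : Finset ℝ := insert (1:ℝ) ((S.erase vs).image t) with hMdef
    have hMne : M.Nonempty := ⟨1, Finset.mem_insert_self _ _⟩
    set m : ℝ := M.min' hMne with hmdef
    have hm1 : m ≤ 1 := Finset.min'_le _ _ (Finset.mem_insert_self _ _)
    have htvs_m : t vs < m := by
      rw [hmdef, Finset.lt_min'_iff]
      intro r hr
      rw [hMdef, Finset.mem_insert] at hr
      rcases hr with rfl | hr
      · exact (htv vs hvsS).2
      · obtain ⟨w, hw, rfl⟩ := Finset.mem_image.1 hr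
        obtain ⟨hwne, hwS⟩ := Finset.mem_erase.1 hw
        exact lt_of_le_of_ne (hvsmin w hwS) (hdist vs hvsS w hwS (Ne.symm hwne))
    set t' : ℝ := (t vs + m) / 2 with ht'def
    have ht'0 : 0 < t' := by
      have := (htv vs hvsS).1
      rw [ht'def]; linarith
    have ht'1 : t' < 1 := by rw [ht'def]; linarith [(htv vs hvsS).2]
    have htlt : t vs < t' := by rw [ht'def]; linarith
    have ht'w : ∀ w ∈ S, w ≠ vs → t' < t w := by
      intro w hw hne
      have hmem : t w ∈ M := Finset.mem_insert_of_mem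
        (Finset.mem_image.2 ⟨w, Finset.mem_erase.2 ⟨hne, hw⟩, rfl⟩)
      have := Finset.min'_le M _ hmem
      rw [ht'def]; linarith
    set x'' : V n := x' + t' • (y - x') with hx''def
    have hdot : ∀ v : V n, v ⬝ᵥ x'' = a v + t' * (b v - a v) := by
      intro v
      simp [hx''def, hadef, hbdef, dotProduct_add, dotProduct_smul,
        dotProduct_sub, smul_eq_mul, mul_sub]
    have claim_pos : ∀ v ∈ A, v ≠ vs → 0 < a v * (v ⬝ᵥ x'') := by
      intro v hvA hne
      rw [hdot]
      by_cases hvS : v ∈ S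
      · exact cross_lt (hSopp v hvS) (ht'w v hvS hne)
      · exact same_sign (hnotS v hvA hvS) ht'0.le ht'1.le
    have claim_neg : a vs * (vs ⬝ᵥ x'') < 0 := by
      rw [hdot]
      exact cross_gt (hSopp vs hvsS) htlt
    have hne'' : ∀ v ∈ A, v ⬝ᵥ x'' ≠ 0 := by
      intro v hvA h0
      by_cases h : v = vs
      · rw [h] at h0; rw [h0, mul_zero] at claim_neg; exact lt_irrefl _ claim_neg
      · have := claim_pos v hvA h; rw [h0, mul_zero] at this; exact lt_irrefl _ this
    set e : V n → Bool := fun v => decide (0 < v ⬝ᵥ x'') with hedef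
    have he : IsChamber A e := by
      refine ⟨x'', fun v hv => ?_⟩
      rcases (hne'' v hv).lt_or_gt with h | h
      · simp [hedef, h.not_gt, h]
      · simp [hedef, h]
    have hceq : ∀ v ∈ A, c v = decide (0 < a v) := by
      intro v hv
      have := hx' v hv
      by_cases h : c v <;> simp [h] at this ⊢
      · exact this
      · exact this.le
    have heeq : ∀ v ∈ A, v ≠ vs → e v = c v := by
      intro v hvA hne
      rw [hceq v hvA, hedef]
      have hp := claim_pos v hvA hne
      rcases mul_pos_iff.1 hp with ⟨h1, h2⟩ | ⟨h1, h2⟩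
      · simp [h1, h2]
      · simp [h1.not_gt, h2.not_gt]
    have hes : e vs = !c vs := by
      rw [hceq vs hvsA, hedef]
      rcases mul_neg_iff.1 claim_neg with ⟨h1, h2⟩ | ⟨h1, h2⟩
      · simp [h1, h2.not_gt]
      · simp [h1.not_gt, h2]
    have hcvs : c vs = c₀ vs := by
      by_contra h
      have hmem : vs ∈ SepSet A c₀ c :=
        Finset.mem_filter.2 ⟨hvsA, fun hh => h hh.symm⟩
      have hmem' : vs ∈ SepSet A c₀ d := hss.1 hmem
      have hd : c₀ vs ≠ d vs := (Finset.mem_filter.1 hmem').2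
      have hcd : c vs ≠ d vs := (Finset.mem_filter.1 hvsS).2
      cases hc : c vs <;> cases hd' : d vs <;> cases hc0 : c₀ vs <;>
        simp [hc, hd', hc0] at h hd hcd
    have hnotmem : vs ∉ SepSet A c₀ c := by
      rw [SepSet, Finset.mem_filter]
      rintro ⟨-, h⟩
      exact h hcvs.symm
    have hsep : SepSet A c₀ e = insert vs (SepSet A c₀ c) := by
      ext v
      simp only [SepSet, Finset.mem_filter, Finset.mem_insert]
      constructor
      · rintro ⟨hvA, hne⟩
        by_cases h : v = vs
        · exact Or.inl h
        · exact Or.inr ⟨hvA, by rwa [heeq v hvA h] at hne⟩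
      · rintro (rfl | ⟨hvA, hne⟩)
        · refine ⟨hvsA, ?_⟩
          rw [hes, ← hcvs]
          cases hc : c v <;> simp [hc]
        · by_cases h : v = vs
          · subst h
            exact absurd hcvs.symm hne
          · exact ⟨hvA, by rwa [heeq v hvA h]⟩
    refine ⟨e, he, ?_, ?_, ?_⟩
    · rw [hsep]; exact Finset.subset_insert _ _
    · rw [hsep]
      refine Finset.insert_subset ?_ hss.1
      refine Finset.mem_filter.2 ⟨hvsA, ?_⟩
      rw [← hcvs]
      exact (Finset.mem_filter.1 hvsS).2
    · rw [hsep, Finset.card_insert_of_notMem hnotmem]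
  · simp [SepSet]
  · refine ⟨-x₀, fun v hv => ?_⟩
    have := hx₀ v hv
    cases h : c₀ v <;> simp [h] at this ⊢ <;>
      simpa [dotProduct_neg] using this
  · rw [SepSet]
    refine Finset.filter_true_of_mem fun v hv => ?_
    cases h : c₀ v <;> simp [h]
end

section
/- Let A be a real central hyperplane arrangement and c, c' chambers. If every wall of c separates c from c' (i.e., W(c) ⊆ S(c,c')), then c' = −c. -/
open Matrix
open scoped Classical

private lemma dot_cont {n : ℕ} (v : V n) : Continuous fun p : V n => v ⬝ᵥ p := by
  unfold dotProduct
  exact continuous_finset_sum _ fun i _ => continuous_const.mul (continuous_apply i)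

private lemma dot_self_pos {n : ℕ} {v : V n} (h : v ≠ 0) : 0 < v ⬝ᵥ v := by
  have h1 := dotProduct_self_eq_zero (v := v)
  have h2 : 0 ≤ v ⬝ᵥ v := Finset.sum_nonneg fun i _ => mul_self_nonneg (v i)
  rcases h2.lt_or_eq with h3 | h3
  · exact h3
  · exact absurd (h1.mp h3.symm) h

private lemma exists_dot_ne_zero {n : ℕ} {u : V n} (hu : u ≠ 0)
    {U : Set (V n)} (hU : IsOpen U) (hne : U.Nonempty) :
    ∃ x ∈ U, u ⬝ᵥ x ≠ 0 := by
  obtain ⟨x₀, hx₀⟩ := hne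
  by_cases h0 : u ⬝ᵥ x₀ ≠ 0
  · exact ⟨x₀, hx₀, h0⟩
  push_neg at h0
  obtain ⟨r, hr, hball⟩ := Metric.isOpen_iff.mp hU x₀ hx₀
  have hnu : (0:ℝ) ≤ ‖u‖ := norm_nonneg u
  set ε : ℝ := r / (2 * (‖u‖ + 1)) with hε
  have hεpos : 0 < ε := by positivity
  have hmem : x₀ + ε • u ∈ U := by
    apply hball
    rw [Metric.mem_ball, dist_eq_norm, add_sub_cancel_left, norm_smul,
      Real.norm_eq_abs, abs_of_pos hεpos, hε, div_mul_eq_mul_div,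
      div_lt_iff₀ (by positivity)]
    nlinarith
  refine ⟨x₀ + ε • u, hmem, ?_⟩
  have : u ⬝ᵥ (x₀ + ε • u) = ε * (u ⬝ᵥ u) := by
    rw [dotProduct_add, h0, zero_add, dotProduct_smul]; rfl
  rw [this]
  exact ne_of_gt (mul_pos hεpos (dot_self_pos hu))

private lemma avoid_kernels {n : ℕ} {ι : Type} (F : Finset ι) (u : ι → V n)
    (hu : ∀ i ∈ F, u i ≠ 0) {U : Set (V n)} (hU : IsOpen U) (hne : U.Nonempty) :
    ∃ x ∈ U, ∀ i ∈ F, u i ⬝ᵥ x ≠ 0 := by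
  induction F using Finset.induction generalizing U with
  | empty =>
    obtain ⟨x, hx⟩ := hne
    exact ⟨x, hx, by simp⟩
  | @insert i F hiF ih =>
    obtain ⟨x₁, hx₁U, hx₁⟩ :=
      exists_dot_ne_zero (hu i (Finset.mem_insert_self i F)) hU hne
    have hU' : IsOpen (U ∩ {p | u i ⬝ᵥ p ≠ 0}) :=
      hU.inter (isOpen_compl_singleton.preimage (dot_cont (u i)))
    obtain ⟨x, hxU, hx⟩ := ih (fun j hj => hu j (Finset.mem_insert_of_mem hj)) hU'
      ⟨x₁, hx₁U, hx₁⟩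
    refine ⟨x, hxU.1, fun j hj => ?_⟩
    rcases Finset.mem_insert.mp hj with h | h
    · subst h; exact hxU.2
    · exact hx j h

private lemma sign_trans {s a : ℝ} (h : 0 < s * a) : 0 < s ↔ 0 < a := by
  constructor <;> intro h' <;> nlinarith

private lemma sign_trans' {s a : ℝ} (h : 0 < s * a) (hs : s < 0) : a < 0 := by nlinarith

private lemma t_facts {a b : ℝ} (h : a * b < 0) :
    0 < a / (a - b) ∧ a / (a - b) < 1 ∧ (1 - a / (a - b)) * a + (a / (a - b)) * b = 0 := by
  have hne : a - b ≠ 0 := by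
    intro h0
    have hab : a = b := by linarith
    rw [hab] at h
    nlinarith [mul_self_nonneg b]
  rcases mul_neg_iff.mp h with ⟨ha, hb⟩ | ⟨ha, hb⟩
  · have hd : 0 < a - b := by linarith
    refine ⟨div_pos ha hd, (div_lt_one hd).mpr (by linarith), by field_simp; ring⟩
  · have hd : 0 < b - a := by linarith
    have heq : a / (a - b) = (-a) / (b - a) := by
      rw [div_eq_div_iff hne (by linarith)]; ring
    rw [heq]
    refine ⟨div_pos (by linarith) hd, (div_lt_one hd).mpr (by linarith), ?_⟩
    field_simp
    ring

private lemma realizes_ne {n : ℕ} {A : Finset (V n)} {c : V n → Bool} {x : V n}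
    (h : Realizes A c x) : ∀ v ∈ A, v ⬝ᵥ x ≠ 0 := by
  intro v hv
  have h1 := h v hv
  by_cases hb : c v
  · rw [if_pos hb] at h1; exact ne_of_gt h1
  · rw [if_neg hb] at h1; exact ne_of_lt h1


theorem walls_in_sep_implies_opposite {n : ℕ} (A : Finset (V n)) (hA : IsArrangement A)
    (c c' : V n → Bool) (hc : IsChamber A c) (hc' : IsChamber A c')
    (hw : ∀ v, IsWall A c v → v ∈ SepSet A c c') :
    ∀ v ∈ A, c' v = !c v := by
  by_contra hcon
  push_neg at hcon
  obtain ⟨v₀, hv₀A, hv₀⟩ := hcon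
  have hv₀eq : c' v₀ = c v₀ := by
    cases h1 : c v₀ <;> cases h2 : c' v₀ <;> simp [h1, h2] at hv₀ ⊢
  obtain ⟨x, hx⟩ := hc
  obtain ⟨y, hy⟩ := hc'
  have hxne := realizes_ne hx
  have hyne := realizes_ne hy
  -- the open set of points with the same strict signs as x on A
  set U : Set (V n) := {p | ∀ v ∈ A, 0 < (v ⬝ᵥ x) * (v ⬝ᵥ p)} with hUdef
  have hUopen : IsOpen U := by
    have hrw : U = ⋂ v ∈ A, {p : V n | 0 < (v ⬝ᵥ x) * (v ⬝ᵥ p)} := by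
      ext p
      simp [hUdef, Set.mem_iInter]
    rw [hrw]
    exact isOpen_biInter_finset fun v _ =>
      isOpen_lt continuous_const (continuous_const.mul (dot_cont v))
  have hxU : x ∈ U := fun v hv => mul_self_pos.mpr (hxne v hv)
  -- generic point x' in U avoiding all tie hyperplanes
  set F : Finset (V n × V n) := (A ×ˢ A).filter (fun q => q.1 ≠ q.2) with hFdef
  set u : V n × V n → V n := fun q => (q.1 ⬝ᵥ (-y)) • q.2 - (q.2 ⬝ᵥ (-y)) • q.1 with hudef
  have hu : ∀ q ∈ F, u q ≠ 0 := by
    rintro ⟨v, w⟩ hq h0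
    rw [hFdef, Finset.mem_filter, Finset.mem_product] at hq
    obtain ⟨⟨hvA, hwA⟩, hvw⟩ := hq
    have hbv : v ⬝ᵥ (-y) ≠ 0 := by
      rw [dotProduct_neg]
      simpa using hyne v hvA
    have hbw : w ⬝ᵥ (-y) ≠ 0 := by
      rw [dotProduct_neg]
      simpa using hyne w hwA
    have hsmul : (v ⬝ᵥ (-y)) • w = (w ⬝ᵥ (-y)) • v := by
      have := sub_eq_zero.mp h0
      exact this
    have hw_eq : w = ((w ⬝ᵥ (-y)) / (v ⬝ᵥ (-y))) • v := by
      calc w = (v ⬝ᵥ (-y))⁻¹ • ((v ⬝ᵥ (-y)) • w) := by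
              rw [smul_smul, inv_mul_cancel₀ hbv, one_smul]
        _ = (v ⬝ᵥ (-y))⁻¹ • ((w ⬝ᵥ (-y)) • v) := by rw [hsmul]
        _ = ((w ⬝ᵥ (-y)) / (v ⬝ᵥ (-y))) • v := by
              rw [smul_smul, div_eq_inv_mul]
    have hratio : (w ⬝ᵥ (-y)) / (v ⬝ᵥ (-y)) ≠ 0 := div_ne_zero hbw hbv
    have hsh : SameHyp v w := by
      intro p
      have hkey : w ⬝ᵥ p = ((w ⬝ᵥ (-y)) / (v ⬝ᵥ (-y))) * (v ⬝ᵥ p) := by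
        conv_lhs => rw [hw_eq]
        rw [smul_dotProduct]; rfl
      constructor
      · intro h1; rw [hkey, h1, mul_zero]
      · intro h1
        rw [hkey] at h1
        rcases mul_eq_zero.mp h1 with h2 | h2
        · exact absurd h2 hratio
        · exact h2
    exact hvw (hA.2 v hvA w hwA hsh)
  obtain ⟨x', hx'U, hx'gen⟩ := avoid_kernels F u hu hUopen ⟨x, hxU⟩
  have hax : ∀ v ∈ A, 0 < (v ⬝ᵥ x) * (v ⬝ᵥ x') := hx'U
  have hgen : ∀ v ∈ A, ∀ w ∈ A, v ≠ w →
      (v ⬝ᵥ (-y)) * (w ⬝ᵥ x') ≠ (w ⬝ᵥ (-y)) * (v ⬝ᵥ x') := by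
    intro v hv w hw hvw heq
    have hmem : (v, w) ∈ F := by
      rw [hFdef, Finset.mem_filter, Finset.mem_product]
      exact ⟨⟨hv, hw⟩, hvw⟩
    have h1 := hx'gen (v, w) hmem
    apply h1
    rw [hudef]
    show ((v ⬝ᵥ (-y)) • w - (w ⬝ᵥ (-y)) • v) ⬝ᵥ x' = 0
    rw [sub_dotProduct, smul_dotProduct, smul_dotProduct,
      smul_eq_mul, smul_eq_mul, heq, sub_self]
  -- sign of v ⬝ᵥ x' matches c, sign of v ⬝ᵥ (-y) is opposite of c'
  have hav : ∀ v ∈ A, if c v then 0 < v ⬝ᵥ x' else v ⬝ᵥ x' < 0 := by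
    intro v hv
    have h1 := hx v hv
    have h3 := hax v hv
    by_cases hb : c v
    · rw [if_pos hb] at h1 ⊢; exact (sign_trans h3).mp h1
    · rw [if_neg hb] at h1 ⊢; exact sign_trans' h3 h1
  have hbv : ∀ v ∈ A, if c' v then v ⬝ᵥ (-y) < 0 else 0 < v ⬝ᵥ (-y) := by
    intro v hv
    have h1 := hy v hv
    rw [dotProduct_neg]
    by_cases hb : c' v
    · rw [if_pos hb] at h1 ⊢; linarith
    · rw [if_neg hb] at h1 ⊢; linarith
  have hsame : ∀ v ∈ A, c' v = c v → (v ⬝ᵥ x') * (v ⬝ᵥ (-y)) < 0 := by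
    intro v hv h
    have h1 := hav v hv
    have h2 := hbv v hv
    rw [h] at h2
    by_cases hb : c v
    · rw [if_pos hb] at h1 h2; exact mul_neg_of_pos_of_neg h1 h2
    · rw [if_neg hb] at h1 h2; exact mul_neg_of_neg_of_pos h1 h2
  have hdiff : ∀ v ∈ A, c' v ≠ c v → 0 < (v ⬝ᵥ x') * (v ⬝ᵥ (-y)) := by
    intro v hv h
    have h1 := hav v hv
    have h2 := hbv v hv
    by_cases hb : c v
    · have hb' : c' v = false := by
        cases h2' : c' v
        · rfl
        · exact absurd (h2'.trans hb.symm) h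
      rw [if_pos hb] at h1
      rw [hb', if_neg (by simp)] at h2
      exact mul_pos h1 h2
    · have hb'' : c v = false := by simpa using hb
      have hb' : c' v = true := by
        cases h2' : c' v
        · exact absurd (h2'.trans hb''.symm) h
        · rfl
      rw [if_neg hb] at h1
      rw [hb', if_pos rfl] at h2
      exact mul_pos_of_neg_of_neg h1 h2
  -- the crossing parameters
  set T : Finset (V n) := A.filter (fun v => c' v = c v) with hTdef
  have hTne : T.Nonempty := ⟨v₀, by rw [hTdef, Finset.mem_filter]; exact ⟨hv₀A, hv₀eq⟩⟩
  set tf : V n → ℝ := fun v => (v ⬝ᵥ x') / ((v ⬝ᵥ x') - (v ⬝ᵥ (-y))) with htfdef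
  obtain ⟨vs, hvsT, hmin⟩ := T.exists_min_image tf hTne
  have hvsA : vs ∈ A := by
    have h := hvsT
    rw [hTdef, Finset.mem_filter] at h
    exact h.1
  have hvs_same : c' vs = c vs := by
    have h := hvsT
    rw [hTdef, Finset.mem_filter] at h
    exact h.2
  obtain ⟨hts0, hts1, htsz⟩ := t_facts (hsame vs hvsA hvs_same)
  set p : V n := (1 - tf vs) • x' + (tf vs) • (-y) with hpdef
  have hdotp : ∀ w : V n, w ⬝ᵥ p =
      (1 - tf vs) * (w ⬝ᵥ x') + (tf vs) * (w ⬝ᵥ (-y)) := by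
    intro w
    rw [hpdef, dotProduct_add, dotProduct_smul, dotProduct_smul]
    rfl
  -- vs is a wall of c
  have hwall : IsWall A c vs := by
    refine ⟨hvsA, p, by rw [hdotp]; exact htsz, ?_⟩
    intro w hwA hnsh
    have hwne : w ≠ vs := by
      rintro rfl
      exact hnsh fun q => Iff.rfl
    have key : 0 < (w ⬝ᵥ x) * (w ⬝ᵥ p) := by
      rw [hdotp]
      by_cases hwT : c' w = c w
      · -- w also crosses; its crossing time is strictly later
        obtain ⟨htw0, htw1, htwz⟩ := t_facts (hsame w hwA hwT)
        have hminw : tf vs ≤ tf w := hmin w (by rw [hTdef, Finset.mem_filter]; exact ⟨hwA, hwT⟩)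
        have hne_t : tf vs ≠ tf w := by
          intro heq
          have hdvs : (vs ⬝ᵥ x') - (vs ⬝ᵥ (-y)) ≠ 0 := by
            have h := hsame vs hvsA hvs_same
            intro h0
            have hab : vs ⬝ᵥ x' = vs ⬝ᵥ (-y) := by linarith
            rw [hab] at h
            nlinarith [mul_self_nonneg (vs ⬝ᵥ (-y))]
          have hdw : (w ⬝ᵥ x') - (w ⬝ᵥ (-y)) ≠ 0 := by
            have h := hsame w hwA hwT
            intro h0
            have hab : w ⬝ᵥ x' = w ⬝ᵥ (-y) := by linarith
            rw [hab] at h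
            nlinarith [mul_self_nonneg (w ⬝ᵥ (-y))]
          rw [htfdef] at heq
          have hcross := (div_eq_div_iff hdvs hdw).mp heq
          exact hgen vs hvsA w hwA hwne.symm (by linear_combination hcross)
        have ht_lt : tf vs < tf w := lt_of_le_of_ne hminw hne_t
        have key2 : (w ⬝ᵥ x) * ((1 - tf vs) * (w ⬝ᵥ x') + tf vs * (w ⬝ᵥ (-y))) * tf w
            = ((w ⬝ᵥ x) * (w ⬝ᵥ x')) * (tf w - tf vs) := by
          linear_combination ((w ⬝ᵥ x) * tf vs) * htwz
        have h3 : 0 < ((w ⬝ᵥ x) * (w ⬝ᵥ x')) * (tf w - tf vs) :=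
          mul_pos (hax w hwA) (sub_pos.mpr ht_lt)
        rw [← key2] at h3
        nlinarith [htw0]
      · -- w does not cross: both endpoint signs agree
        have hab_w := hdiff w hwA hwT
        have haw : (w ⬝ᵥ x') ≠ 0 := by
          intro h0
          rw [h0, zero_mul] at hab_w
          exact lt_irrefl 0 hab_w
        have hwxb : 0 < (w ⬝ᵥ x) * (w ⬝ᵥ (-y)) := by
          nlinarith [mul_pos (hax w hwA) hab_w, mul_self_pos.mpr haw]
        nlinarith [mul_pos (sub_pos.mpr hts1) (hax w hwA), mul_pos hts0 hwxb]
    have h1 := hx w hwA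
    by_cases hb : c w
    · rw [if_pos hb] at h1 ⊢; exact (sign_trans key).mp h1
    · rw [if_neg hb] at h1 ⊢; exact sign_trans' key h1
  have hsep := hw vs hwall
  rw [SepSet, Finset.mem_filter] at hsep
  exact hsep.2 hvs_same.symm
end

section
/- Let A be a real central hyperplane arrangement with chambers c₀ and c, and I ⊆ A. Then I is biclosed with respect to c₀ if and only if the symmetric difference I △ S(c₀,c) is biclosed with respect to c. In particular, the property of being biclosed is independent of the choice of fundamental chamber up to symmetric difference with a separation set. -/
open Matrix
open scoped Classical

lemma biclosed_forward {n : ℕ} (A : Finset (V n))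
    (c₀ c : V n → Bool) (I : Finset (V n))
    (h : IsBiclosed A c₀ I) : IsBiclosed A c (symmDiff I (SepSet A c₀ c)) := by
  intro u w huw
  obtain ⟨d, hd, hId⟩ := h u w huw
  refine ⟨d, hd, ?_⟩
  ext v
  have hmem : v ∈ I ∩ loc A u w ↔ v ∈ SepSet (loc A u w) c₀ d := by rw [hId]
  by_cases hv : v ∈ loc A u w
  · have hvA : v ∈ A := (Finset.mem_filter.mp hv).1
    simp only [Finset.mem_inter, Finset.mem_symmDiff, SepSet, Finset.mem_filter,
      hv, hvA, true_and, and_true] at hmem ⊢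
    rw [hmem]
    cases hc0v : c₀ v <;> cases hcv : c v <;> cases hdv : d v <;> simp
  · simp only [Finset.mem_inter, SepSet, Finset.mem_filter, hv, and_false, false_and,
      iff_false]

theorem biclosed_change_of_base {n : ℕ} (A : Finset (V n)) (hA : IsArrangement A)
    (c₀ c : V n → Bool) (hc₀ : IsChamber A c₀) (hc : IsChamber A c)
    (I : Finset (V n)) (hIA : I ⊆ A) :
    IsBiclosed A c₀ I ↔ IsBiclosed A c (symmDiff I (SepSet A c₀ c)) := by
  constructor
  · exact biclosed_forward A c₀ c I
  · intro h
    have hsep : SepSet A c c₀ = SepSet A c₀ c := by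
      simp only [SepSet]; apply Finset.filter_congr; intro v _; simp [ne_comm]
    have := biclosed_forward A c c₀ (symmDiff I (SepSet A c₀ c)) h
    rwa [hsep, symmDiff_symmDiff_cancel_right] at this
end

section
/- Let A be a real central hyperplane arrangement with fundamental chamber c₀, and let c ≤ d in the chamber poset (i.e., S(c₀,c) ⊆ S(c₀,d)). Then S(c,d) is convex: for every hyperplane H ∈ A − S(c,d) there exists a chamber e with H ∈ S(c₀,e) and S(c₀,e) ⊆ A − S(c,d). -/
open Matrix
open scoped Classical

theorem interval_sep_convex {n : ℕ} (A : Finset (V n)) (hA : IsArrangement A)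
    (c₀ c d : V n → Bool) (hc₀ : IsChamber A c₀) (hc : IsChamber A c)
    (hd : IsChamber A d) (hcd : SepSet A c₀ c ⊆ SepSet A c₀ d) :
    IsConvex A c₀ (SepSet A c d) := by
  intro H hH
  rw [Finset.mem_sdiff] at hH
  obtain ⟨hHA, hHS⟩ := hH
  have hcdH : c H = d H := by
    by_contra h
    exact hHS (Finset.mem_filter.mpr ⟨hHA, h⟩)
  by_cases hHc : c₀ H = c H
  · -- take e = -d
    refine ⟨fun v => !d v, ?_, ?_, ?_⟩
    · obtain ⟨x, hx⟩ := hd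
      refine ⟨-x, fun v hv => ?_⟩
      have := hx v hv
      cases hdv : d v <;> simp [hdv, dotProduct_neg] at this ⊢ <;> linarith
    · refine Finset.mem_filter.mpr ⟨hHA, ?_⟩
      rw [hHc, hcdH]; simp
    · intro v hv
      obtain ⟨hvA, hv2⟩ := Finset.mem_filter.mp hv
      have hvd : c₀ v = d v := by cases hx : d v <;> cases hy : c₀ v <;> simp_all
      refine Finset.mem_sdiff.mpr ⟨hvA, fun hvS => ?_⟩
      have hcd2 : c v ≠ d v := (Finset.mem_filter.mp hvS).2
      have hvc : v ∈ SepSet A c₀ c := Finset.mem_filter.mpr ⟨hvA, by rw [hvd]; exact fun h => hcd2 h.symm⟩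
      have := (Finset.mem_filter.mp (hcd hvc)).2
      exact this hvd
  · -- take e = c
    refine ⟨c, hc, Finset.mem_filter.mpr ⟨hHA, hHc⟩, ?_⟩
    intro v hv
    obtain ⟨hvA, hv2⟩ := Finset.mem_filter.mp hv
    refine Finset.mem_sdiff.mpr ⟨hvA, fun hvS => ?_⟩
    have hcd2 : c v ≠ d v := (Finset.mem_filter.mp hvS).2
    have hvc : v ∈ SepSet A c₀ c := Finset.mem_filter.mpr ⟨hvA, hv2⟩
    have := (Finset.mem_filter.mp (hcd hvc)).2
    cases hx : c v <;> cases hy : d v <;> cases hz : c₀ v <;> simp_all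
end

section
/- Let A be a real central hyperplane arrangement with fundamental chamber c₀ on the positive side of every hyperplane, viewed via its oriented matroid of circuits. A subset I ⊆ A is separable (equal to S(c₀,c) for some chamber c) if and only if there is no circuit v ∈ {0,+,−}^A with v⁻¹(+) ⊆ I and v⁻¹(−) ⊆ A − I. -/
open Matrix
open scoped Classical

lemma signType_neg_eq_zero : ∀ a : SignType, -a = 0 ↔ a = 0 := by decide
lemma signType_neg_eq_one : ∀ a : SignType, -a = 1 ↔ a = -1 := by decide
lemma signType_neg_eq_negone : ∀ a : SignType, -a = -1 ↔ a = 1 := by decide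
lemma signType_neg_neg : ∀ a : SignType, -(-a) = a := by decide

lemma feasible_zero_support {n : ℕ} (A : Finset (V n)) (w : V n → SignType)
    (h : ∀ h, w h = 0) : Feasible A w := by
  refine ⟨0, fun v _ => ⟨fun h1 => ?_, fun h1 => ?_⟩⟩ <;> simp [h v] at h1

lemma feasible_neg {n : ℕ} (A : Finset (V n)) (w : V n → SignType)
    (h : Feasible A w) : Feasible A (fun v => -(w v)) := by
  obtain ⟨x, hx⟩ := h
  refine ⟨-x, fun v hv => ⟨fun h1 => ?_, fun h1 => ?_⟩⟩
  · have : w v = -1 := by cases hw : w v <;> simp [hw] at h1 ⊢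
    have := (hx v hv).2 this
    simpa [dotProduct_neg] using this
  · have : w v = 1 := by cases hw : w v <;> simp [hw] at h1 ⊢
    have := (hx v hv).1 this
    simpa [dotProduct_neg] using this

lemma isCircuit_neg {n : ℕ} (A : Finset (V n)) (w : V n → SignType)
    (h : IsCircuit A w) : IsCircuit A (fun v => -(w v)) := by
  obtain ⟨hsupp, ⟨h0, hh0⟩, hinf, hmin⟩ := h
  refine ⟨fun v hv => hsupp v (fun h0 => hv (by show -w v = 0; rw [h0]; rfl)),
    ⟨h0, fun h0 => hh0 ((signType_neg_eq_zero _).mp h0)⟩, ?_, ?_⟩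
  · intro hf
    have := feasible_neg A _ hf
    simp only [signType_neg_neg] at this
    exact hinf this
  · intro w' hconf hss
    have hconf' : ∀ v, (-(w' v)) ≠ 0 → (-(w' v)) = w v := by
      intro v hv
      have hne : w' v ≠ 0 := fun h0 => hv (by rw [h0]; rfl)
      have := hconf v hne
      simp only [this]
      exact signType_neg_neg _
    have hss' : {v | -(w' v) ≠ 0} ⊂ {v | w v ≠ 0} := by
      have e1 : {v | -(w' v) ≠ 0} = {v | w' v ≠ 0} := by
        ext v; simp [signType_neg_eq_zero]
      have e2 : {v | w v ≠ 0} = {v | -(w v) ≠ 0} := by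
        ext v; simp [signType_neg_eq_zero]
      rw [e1, e2]; exact hss
    have := hmin (fun v => -(w' v)) hconf' hss'
    have := feasible_neg A _ this
    simpa only [signType_neg_neg] using this

lemma exists_circuit_conformal {n : ℕ} (A : Finset (V n)) :
    ∀ (N : ℕ) (w : V n → SignType), (A.filter (fun h => w h ≠ 0)).card = N →
      (∀ h, w h ≠ 0 → h ∈ A) → ¬ Feasible A w →
      ∃ v, IsCircuit A v ∧ ∀ h, v h ≠ 0 → v h = w h := by
  intro N
  induction N using Nat.strong_induction_on with
  | _ N ih =>
    intro w hcard hsupp hinf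
    by_cases hmin : ∀ w' : V n → SignType, (∀ h, w' h ≠ 0 → w' h = w h) →
        {h | w' h ≠ 0} ⊂ {h | w h ≠ 0} → Feasible A w'
    · refine ⟨w, ⟨hsupp, ?_, hinf, hmin⟩, fun h _ => rfl⟩
      by_contra hne
      push_neg at hne
      exact hinf (feasible_zero_support A w hne)
    · push_neg at hmin
      obtain ⟨w', hconf, hss, hinf'⟩ := hmin
      have hsupp' : ∀ h, w' h ≠ 0 → h ∈ A := fun h hh => hsupp h (hss.subset hh)
      have hlt : (A.filter (fun h => w' h ≠ 0)).card < N := by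
        rw [← hcard]
        apply Finset.card_lt_card
        constructor
        · intro h hh
          simp only [Finset.mem_filter] at hh ⊢
          exact ⟨hh.1, hss.subset hh.2⟩
        · intro hsub
          obtain ⟨h, hw, hw'⟩ := (Set.ssubset_iff_of_subset hss.subset).mp hss
          have : h ∈ A.filter (fun h => w h ≠ 0) := by
            simp only [Finset.mem_filter]; exact ⟨hsupp h hw, hw⟩
          have := hsub this
          simp only [Finset.mem_filter] at this
          exact hw' this.2
      obtain ⟨v, hv, hvconf⟩ := ih _ hlt w' rfl hsupp' hinf'
      exact ⟨v, hv, fun h hh => by rw [hvconf h hh]; exact hconf h (by rw [← hvconf h hh]; exact hh)⟩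

theorem separable_iff_no_circuit {n : ℕ} (A : Finset (V n)) (hA : IsArrangement A)
    (hc₀ : IsChamber A (fun _ => true)) (I : Finset (V n)) (hIA : I ⊆ A) :
    (∃ c, IsChamber A c ∧ I = SepSet A (fun _ => true) c) ↔
      ¬ ∃ v : V n → SignType, IsCircuit A v ∧
        {h | v h = 1} ⊆ (I : Set (V n)) ∧
        {h | v h = -1} ⊆ ((A \ I : Finset (V n)) : Set (V n)) := by
  constructor
  · rintro ⟨c, ⟨x, hx⟩, hI⟩ ⟨v, hv, hvp, hvm⟩
    apply hv.2.2.1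
    refine ⟨-x, fun h hh => ⟨fun h1 => ?_, fun h1 => ?_⟩⟩
    · have hhI : h ∈ I := hvp h1
      have hcf : c h = false := by
        rw [hI] at hhI
        simp only [SepSet, Finset.mem_filter] at hhI
        simpa using hhI.2
      have := hx h hh
      rw [hcf] at this
      simp only [if_neg (by simp : ¬ (false = true))] at this
      simpa [dotProduct_neg] using this
    · have hhAI : h ∈ A \ I := hvm h1
      have hnI : h ∉ I := (Finset.mem_sdiff.mp hhAI).2
      have hct : c h = true := by
        by_contra hcf
        apply hnI
        rw [hI]
        simp only [SepSet, Finset.mem_filter]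
        exact ⟨hh, by simp at hcf; simp [hcf]⟩
      have := hx h hh
      rw [hct] at this
      simp only [if_pos rfl] at this
      simpa [dotProduct_neg] using this
  · intro hnc
    by_contra hsep
    apply hnc
    set σ : V n → SignType := fun h => if h ∈ I then -1 else if h ∈ A then 1 else 0 with hσ
    have hsupp : ∀ h, σ h ≠ 0 → h ∈ A := by
      intro h hh
      by_cases h1 : h ∈ I
      · exact hIA h1
      · by_cases h2 : h ∈ A
        · exact h2
        · simp [hσ, h1, h2] at hh
    have hinf : ¬ Feasible A σ := by
      rintro ⟨x, hx⟩
      apply hsep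
      refine ⟨fun v => !(decide (v ∈ I)), ⟨x, fun v hv => ?_⟩, ?_⟩
      · by_cases hvI : v ∈ I
        · have := (hx v hv).2 (by simp [hσ, hvI])
          simp [hvI, this]
        · have := (hx v hv).1 (by simp [hσ, hvI, hv])
          simp [hvI, this]
      · ext h
        simp only [SepSet, Finset.mem_filter]
        by_cases hhI : h ∈ I
        · simp [hhI, hIA hhI]
        · simp [hhI]
    obtain ⟨v, hv, hvconf⟩ := exists_circuit_conformal A _ σ rfl hsupp hinf
    refine ⟨fun h => -(v h), isCircuit_neg A v hv, ?_, ?_⟩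
    · intro h hh
      have hvh : v h = -1 := (signType_neg_eq_one _).mp hh
      have hσh : σ h = -1 := (hvconf h (by rw [hvh]; decide)).symm.trans hvh
      show h ∈ (I : Set (V n))
      rw [Finset.mem_coe]
      by_contra hhI
      rw [hσ] at hσh
      simp only [if_neg hhI] at hσh
      split_ifs at hσh <;> exact absurd hσh (by decide)
    · intro h hh
      have hvh : v h = 1 := (signType_neg_eq_negone _).mp hh
      have hσh : σ h = 1 := (hvconf h (by rw [hvh]; decide)).symm.trans hvh
      rw [hσ] at hσh
      by_cases hhI : h ∈ I
      · simp only [if_pos hhI] at hσh; exact absurd hσh (by decide)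
      · by_cases h2 : h ∈ A
        · show h ∈ ((A \ I : Finset (V n)) : Set (V n))
          rw [Finset.mem_coe, Finset.mem_sdiff]
          exact ⟨h2, hhI⟩
        · simp only [if_neg hhI, if_neg h2] at hσh
          exact absurd hσh (by decide)
end

section
/- Let A be a real central hyperplane arrangement with fundamental chamber c₀ such that every biclosed subset of A is the separation set of some chamber. If π: H₁,...,H_N is an admissible permutation of A (for each codimension-2 subspace X, the induced order on A_X is the crossing order of some reduced gallery of A_X from (c₀)_X to −(c₀)_X), then there exists a reduced gallery c₀ = d₀ < d₁ < ... < d_N = −c₀ with S(d_{i−1}, d_i) = {H_i} for all i. -/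
open Matrix
open scoped Classical

lemma mem_sepSet {n : ℕ} {A : Finset (V n)} {c d : V n → Bool} {v : V n} :
    v ∈ SepSet A c d ↔ v ∈ A ∧ c v ≠ d v := by
  simp [SepSet]

lemma initseg {M : ℕ} (S : Finset (Fin M))
    (hS : ∀ k k' : Fin M, k' ≤ k → k ∈ S → k' ∈ S) (k : Fin M) :
    k ∈ S ↔ (k : ℕ) < S.card := by
  constructor
  · intro hk
    have h1 : Finset.Iic k ⊆ S := fun k' hk' => hS k k' (Finset.mem_Iic.1 hk') hk
    have h2 := Finset.card_le_card h1
    rw [Fin.card_Iic] at h2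
    omega
  · intro hk
    by_contra hns
    have h1 : S ⊆ Finset.Iio k := by
      intro k' hk'
      rw [Finset.mem_Iio]
      by_contra h
      exact hns (hS k' k (le_of_not_gt h) hk')
    have h2 := Finset.card_le_card h1
    rw [Fin.card_Iio] at h2
    omega

lemma gallery_prefix {n M : ℕ} (B : Finset (V n)) (c₀ : V n → Bool) (G : Fin M → V n)
    (e : Fin (M + 1) → V n → Bool) (hg : IsGallery B c₀ G e)
    (hGinj : Function.Injective G) (t : Fin (M + 1)) :
    SepSet B c₀ (e t) =
      (Finset.univ.filter (fun k : Fin M => (k : ℕ) < (t : ℕ))).image G := by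
  induction t using Fin.induction with
  | zero =>
    rw [hg.2.1]
    ext v; simp [SepSet]
  | succ i ih =>
    have hsep := hg.2.2.2 i
    have hGimem : G i ∈ SepSet B (e i.castSucc) (e i.succ) := by rw [hsep]; simp
    have hGiB : G i ∈ B := (mem_sepSet.1 hGimem).1
    have hGi : e i.castSucc (G i) ≠ e i.succ (G i) := (mem_sepSet.1 hGimem).2
    have ihv : ∀ v, v ∈ B ∧ c₀ v ≠ e i.castSucc v ↔ ∃ k : Fin M, (k : ℕ) < (i : ℕ) ∧ G k = v := by
      intro v
      rw [← mem_sepSet, ih]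
      simp
    ext v
    simp only [mem_sepSet, Finset.mem_image, Finset.mem_filter, Finset.mem_univ, true_and,
      Fin.val_succ]
    by_cases hv : v = G i
    · subst hv
      constructor
      · intro _
        exact ⟨i, by omega, rfl⟩
      · intro _
        refine ⟨hGiB, ?_⟩
        have hnot : ¬ (c₀ (G i) ≠ e i.castSucc (G i)) := by
          intro hne
          obtain ⟨k, hk, hkv⟩ := (ihv (G i)).1 ⟨hGiB, hne⟩
          have hki : k = i := hGinj hkv
          subst hki; omega
        have h1 : c₀ (G i) = e i.castSucc (G i) := not_ne_iff.1 hnot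
        rw [h1]; exact hGi
    · have heq : v ∈ B → e i.castSucc v = e i.succ v := by
        intro hvB
        by_contra hne
        have hmem : v ∈ SepSet B (e i.castSucc) (e i.succ) := mem_sepSet.2 ⟨hvB, hne⟩
        rw [hsep] at hmem
        simp at hmem
        exact hv hmem
      constructor
      · rintro ⟨hvB, hne⟩
        rw [← heq hvB] at hne
        obtain ⟨k, hk, hkv⟩ := (ihv v).1 ⟨hvB, hne⟩
        exact ⟨k, by omega, hkv⟩
      · rintro ⟨k, hk, hkv⟩
        have hki : (k : ℕ) < (i : ℕ) := by
          rcases Nat.lt_or_ge (k : ℕ) (i : ℕ) with h | h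
          · exact h
          · exfalso
            have : k = i := Fin.ext (by omega)
            subst this
            exact hv hkv.symm
        have hres := (ihv v).2 ⟨k, hki, hkv⟩
        exact ⟨hres.1, by rw [← heq hres.1]; exact hres.2⟩

lemma initial_biclosed {n N : ℕ} (A : Finset (V n)) (c₀ : V n → Bool) (H : Fin N → V n)
    (hinj : Function.Injective H) (hadm : Admissible A c₀ H) (j : ℕ) :
    IsBiclosed A c₀ ((Finset.univ.filter (fun i : Fin N => (i : ℕ) < j)).image H) := by
  intro u w hc2
  obtain ⟨M, G, e, φ, hg, hφ, hGH⟩ := hadm u w hc2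
  have hGinj : Function.Injective G := by
    intro a b hab
    rw [hGH, hGH] at hab
    exact hφ.injective (hinj hab)
  set S : Finset (Fin M) := Finset.univ.filter (fun k => ((φ k : ℕ)) < j) with hS
  have hdc : ∀ k k' : Fin M, k' ≤ k → k ∈ S → k' ∈ S := by
    intro k k' hle hk
    simp only [hS, Finset.mem_filter, Finset.mem_univ, true_and] at *
    have : (φ k' : ℕ) ≤ (φ k : ℕ) := hφ.monotone hle
    omega
  have hmem_iff := initseg S hdc
  have hm : S.card ≤ M := by
    have := Finset.card_filter_le (Finset.univ : Finset (Fin M)) (fun k => ((φ k : ℕ)) < j)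
    simpa using this
  -- loc = image of G
  have hlast := gallery_prefix (loc A u w) c₀ G e hg hGinj (Fin.last M)
  have hloc : loc A u w = Finset.univ.image G := by
    have h1 : SepSet (loc A u w) c₀ (e (Fin.last M)) = loc A u w := by
      ext v
      rw [mem_sepSet]
      constructor
      · exact fun h => h.1
      · intro h
        refine ⟨h, ?_⟩
        rw [hg.2.2.1 v h]
        simp
    rw [← h1, hlast]
    ext v
    simp [Fin.is_lt]
  refine ⟨e ⟨S.card, Nat.lt_succ_of_le hm⟩, hg.1 _, ?_⟩
  rw [gallery_prefix (loc A u w) c₀ G e hg hGinj ⟨S.card, Nat.lt_succ_of_le hm⟩]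
  ext v
  simp only [Finset.mem_inter, Finset.mem_image, Finset.mem_filter, Finset.mem_univ, true_and]
  constructor
  · rintro ⟨⟨i, hi, rfl⟩, hvloc⟩
    rw [hloc] at hvloc
    simp only [Finset.mem_image, Finset.mem_univ, true_and] at hvloc
    obtain ⟨k, hk⟩ := hvloc
    have hφk : φ k = i := by
      apply hinj
      rw [← hGH]; exact hk
    have hkS : k ∈ S := by
      simp only [hS, Finset.mem_filter, Finset.mem_univ, true_and]
      rw [hφk]; exact hi
    exact ⟨k, (hmem_iff k).1 hkS, hk⟩
  · rintro ⟨k, hk, rfl⟩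
    have hkS : k ∈ S := (hmem_iff k).2 hk
    simp only [hS, Finset.mem_filter, Finset.mem_univ, true_and] at hkS
    constructor
    · exact ⟨φ k, hkS, (hGH k).symm⟩
    · rw [hloc]
      exact Finset.mem_image_of_mem G (Finset.mem_univ k)

theorem admissible_order_yields_gallery {n : ℕ} (A : Finset (V n)) (hA : IsArrangement A)
    (c₀ : V n → Bool) (hc₀ : IsChamber A c₀)
    (hbic : ∀ I ⊆ A, IsBiclosed A c₀ I → ∃ c, IsChamber A c ∧ I = SepSet A c₀ c)
    (N : ℕ) (hN : N = A.card) (H : Fin N → V n) (hmem : ∀ i, H i ∈ A)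
    (hinj : Function.Injective H) (hadm : Admissible A c₀ H) :
    ∃ d : Fin (N + 1) → V n → Bool, IsGallery A c₀ H d := by

  set I : ℕ → Finset (V n) := fun j => (Finset.univ.filter (fun i : Fin N => (i : ℕ) < j)).image H with hI
  have hmemI : ∀ j v, v ∈ I j ↔ ∃ i : Fin N, (i : ℕ) < j ∧ H i = v := by
    intro j v; simp [hI]
  have hIsub : ∀ j, I j ⊆ A := by
    intro j v hv
    obtain ⟨i, _, rfl⟩ := (hmemI j v).1 hv
    exact hmem i
  have hIbc : ∀ j, IsBiclosed A c₀ (I j) := fun j => initial_biclosed A c₀ H hinj hadm j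
  choose f hf1 hf2 using fun j => hbic (I j) (hIsub j) (hIbc j)
  have hval : ∀ (j : ℕ) (v : V n), v ∈ A → (if v ∈ I j then !c₀ v else c₀ v) = f j v := by
    intro j v hv
    have h1 : v ∈ I j ↔ c₀ v ≠ f j v := by
      rw [hf2 j]; simp [mem_sepSet, hv]
    by_cases h : v ∈ I j
    · rw [if_pos h]
      have h2 := h1.1 h
      cases hc : c₀ v <;> cases hd : f j v <;> simp_all
    · rw [if_neg h]
      have h2 : ¬ (c₀ v ≠ f j v) := fun hh => h (h1.2 hh)
      exact (not_ne_iff.1 h2)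
  refine ⟨fun j v => if v ∈ I (j : ℕ) then !c₀ v else c₀ v, ?_, ?_, ?_, ?_⟩
  · intro j
    obtain ⟨x, hx⟩ := hf1 (j : ℕ)
    refine ⟨x, ?_⟩
    intro v hv
    have := hx v hv
    beta_reduce
    rw [show (if v ∈ I (j : ℕ) then !c₀ v else c₀ v) = f (j : ℕ) v from hval _ v hv]
    exact this
  · funext v
    simp [hI]
  · intro v hv
    have himg : Finset.univ.image H = A := by
      apply Finset.eq_of_subset_of_card_le
      · intro x hx
        simp only [Finset.mem_image, Finset.mem_univ, true_and] at hx
        obtain ⟨i, rfl⟩ := hx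
        exact hmem i
      · rw [Finset.card_image_of_injective _ hinj, Finset.card_univ, Fintype.card_fin]
        omega
    have hvI : v ∈ I ((Fin.last N : Fin (N+1)) : ℕ) := by
      rw [hmemI]
      have : v ∈ Finset.univ.image H := by rw [himg]; exact hv
      simp only [Finset.mem_image, Finset.mem_univ, true_and] at this
      obtain ⟨i, rfl⟩ := this
      exact ⟨i, by simp [Fin.is_lt], rfl⟩
    beta_reduce
    rw [if_pos hvI]
  · intro i
    have hsubI : I ((i : ℕ)) ⊆ I ((i : ℕ) + 1) := by
      intro v hv
      rw [hmemI] at *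
      obtain ⟨k, hk, hkv⟩ := hv
      exact ⟨k, by omega, hkv⟩
    have hIi1 : ∀ v, v ∈ I ((i : ℕ) + 1) ↔ v ∈ I (i : ℕ) ∨ v = H i := by
      intro v
      rw [hmemI, hmemI]
      constructor
      · rintro ⟨k, hk, rfl⟩
        rcases Nat.lt_or_ge (k : ℕ) (i : ℕ) with h | h
        · exact Or.inl ⟨k, h, rfl⟩
        · right
          have : k = i := Fin.ext (by omega)
          rw [this]
      · rintro (⟨k, hk, rfl⟩ | rfl)
        · exact ⟨k, by omega, rfl⟩
        · exact ⟨i, by omega, rfl⟩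
    have hHiI : H i ∉ I (i : ℕ) := by
      rw [hmemI]
      rintro ⟨k, hk, hkv⟩
      have : k = i := hinj hkv
      subst this
      omega
    ext v
    simp only [mem_sepSet, Finset.mem_singleton, Fin.coe_castSucc, Fin.val_succ]
    constructor
    · rintro ⟨hvA, hne⟩
      by_cases h1 : v ∈ I (i : ℕ)
      · exfalso
        rw [if_pos h1, if_pos (hsubI h1)] at hne
        exact hne rfl
      · by_cases h2 : v ∈ I ((i : ℕ) + 1)
        · rcases (hIi1 v).1 h2 with h | h
          · exact absurd h h1
          · exact h
        · exfalso
          rw [if_neg h1, if_neg h2] at hne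
          exact hne rfl
    · rintro rfl
      refine ⟨hmem i, ?_⟩
      rw [if_neg hHiI, if_pos ((hIi1 (H i)).2 (Or.inr rfl))]
      simp
end

section
/- Let H₁,...,H_N be an admissible permutation of a real central hyperplane arrangement A with fundamental chamber c₀. Suppose the hyperplanes containing some codimension-2 intersection subspace X form a contiguous subsequence H_i, H_{i+1}, ..., H_j. Then the permutation obtained by reversing this subsequence, H₁,...,H_{i−1}, H_j,...,H_i, H_{j+1},...,H_N, is also admissible. -/
open Matrix
open scoped Classical

/-- If `v ⬝ᵥ x` vanishes whenever `u ⬝ᵥ x` and `w ⬝ᵥ x` do, then `v ∈ span {u, w}`. -/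
lemma mem_span_pair_of_ker {n : ℕ} (u w v : V n)
    (h : ∀ x, u ⬝ᵥ x = 0 → w ⬝ᵥ x = 0 → v ⬝ᵥ x = 0) :
    v ∈ Submodule.span ℝ ({u, w} : Set (V n)) := by
  classical
  set E := EuclideanSpace ℝ (Fin n) with hE
  let φ : E ≃ₗ[ℝ] V n := WithLp.linearEquiv 2 ℝ (∀ _ : Fin n, ℝ)
  have hdot : ∀ (a : V n) (x : E), a ⬝ᵥ (φ x) = @inner ℝ E _ (φ.symm a) x := by
    intro a x
    simp [PiLp.inner_apply, RCLike.inner_apply, dotProduct]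
    show _ = @inner ℝ (EuclideanSpace ℝ (Fin n)) _ (φ.symm a) x
    rw [PiLp.inner_apply]
    simp [φ]
    refine Finset.sum_congr rfl fun k _ => ?_
    rw [mul_comm]
    rfl
  let u' : E := φ.symm u
  let w' : E := φ.symm w
  let v' : E := φ.symm v
  let K : Submodule ℝ E := Submodule.span ℝ ({u', w'} : Set E)
  have hv : v' ∈ Kᗮᗮ := by
    rw [Submodule.mem_orthogonal]
    intro x hx
    rw [Submodule.mem_orthogonal] at hx
    have hu : u ⬝ᵥ (φ x) = 0 := by
      rw [hdot]; exact hx u' (Submodule.subset_span (by simp))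
    have hw : w ⬝ᵥ (φ x) = 0 := by
      rw [hdot]; exact hx w' (Submodule.subset_span (by simp))
    rw [real_inner_comm, show v' = φ.symm v from rfl, ← hdot]
    exact h (φ x) hu hw
  rw [Submodule.orthogonal_orthogonal] at hv
  have := Submodule.mem_map_of_mem (f := φ.toLinearMap) hv
  rw [Submodule.map_span] at this
  simpa [Set.image_insert_eq, u', w', v'] using this

lemma dot_eq_zero_of_mem_span {n : ℕ} {u w v : V n}
    (h : v ∈ Submodule.span ℝ ({u, w} : Set (V n))) :
    ∀ x, u ⬝ᵥ x = 0 → w ⬝ᵥ x = 0 → v ⬝ᵥ x = 0 := by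
  intro x hu hw
  induction h using Submodule.span_induction with
  | mem y hy => rcases hy with rfl | rfl <;> assumption
  | zero => simp
  | add a b _ _ ha hb => simp [add_dotProduct, ha, hb]
  | smul c a _ ha => simp [smul_dotProduct, ha]

lemma span_pair_le_span_pair {n : ℕ} (u w v1 v2 : V n) (hli : LinearIndependent ℝ ![v1, v2])
    (h1 : v1 ∈ Submodule.span ℝ ({u, w} : Set (V n)))
    (h2 : v2 ∈ Submodule.span ℝ ({u, w} : Set (V n))) :
    Submodule.span ℝ ({u, w} : Set (V n)) ≤ Submodule.span ℝ ({v1, v2} : Set (V n)) := by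
  have hle : Submodule.span ℝ ({v1, v2} : Set (V n)) ≤ Submodule.span ℝ ({u, w} : Set (V n)) := by
    rw [Submodule.span_le]
    rintro y (rfl | rfl) <;> assumption
  have hr : ({v1, v2} : Set (V n)) = Set.range ![v1, v2] := by
    simp [Matrix.range_cons, Matrix.range_cons_empty, Set.pair_comm]
  have h2' : Module.finrank ℝ (Submodule.span ℝ ({v1, v2} : Set (V n))) = 2 := by
    rw [hr, finrank_span_eq_card hli]; simp
  have hcard : Module.finrank ℝ (Submodule.span ℝ ({u, w} : Set (V n))) ≤ 2 := by
    refine le_trans (finrank_span_le_card _) ?_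
    rw [Set.toFinset_insert, Set.toFinset_singleton]
    exact (Finset.card_insert_le _ _).trans (by simp)
  exact le_of_eq (Submodule.eq_of_le_of_finrank_le hle (by omega)).symm

/-- Reversing a reduced gallery. -/
lemma gallery_rev {n M : ℕ} (L : Finset (V n)) (c₀ : V n → Bool)
    (G : Fin M → V n) (e : Fin (M + 1) → V n → Bool) (hg : IsGallery L c₀ G e) :
    IsGallery L c₀ (fun k => G k.rev)
      (fun k v => if v ∈ L then !(e k.rev v) else c₀ v) := by
  obtain ⟨hch, h0, hl, hsep⟩ := hg
  refine ⟨?_, ?_, ?_, ?_⟩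
  · intro k
    obtain ⟨x, hx⟩ := hch k.rev
    refine ⟨-x, fun v hv => ?_⟩
    have := hx v hv
    cases hcv : e k.rev v <;> simp [hv, hcv, dotProduct_neg] at this ⊢ <;> linarith
  · funext v
    by_cases hv : v ∈ L
    · simp [hv, Fin.rev_zero, hl v hv]
    · simp [hv]
  · intro v hv
    simp [hv, Fin.rev_last, h0]
  · intro k
    rw [← hsep k.rev]
    unfold SepSet
    ext v
    simp only [Finset.mem_filter]
    constructor
    · rintro ⟨hv, hne⟩
      refine ⟨hv, ?_⟩
      simp [hv, Fin.rev_castSucc, Fin.rev_succ] at hne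
      simp [Fin.rev_castSucc, Fin.rev_succ] at hne ⊢
      tauto
    · rintro ⟨hv, hne⟩
      refine ⟨hv, ?_⟩
      simp [hv, Fin.rev_castSucc, Fin.rev_succ]
      tauto

theorem admissible_flip {n N : ℕ} (A : Finset (V n)) (hA : IsArrangement A)
    (c₀ : V n → Bool) (hc₀ : IsChamber A c₀) (H : Fin N → V n) (hmem : ∀ i, H i ∈ A)
    (hinj : Function.Injective H) (hsurj : ∀ v ∈ A, ∃ i, H i = v)
    (hadm : Admissible A c₀ H)
    (u w : V n) (huw : Codim2 A u w) (i j : Fin N) (hij : i ≤ j)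
    (hcontig : ∀ k : Fin N, H k ∈ loc A u w ↔ ((i : ℕ) ≤ k ∧ (k : ℕ) ≤ j)) :
    Admissible A c₀ (fun k : Fin N =>
      if h : (i : ℕ) ≤ (k : ℕ) ∧ (k : ℕ) ≤ (j : ℕ) then
        H ⟨(i : ℕ) + (j : ℕ) - (k : ℕ), by have hj := j.isLt; omega⟩
      else H k) := by

  intro u' w' huw'
  obtain ⟨M, G, e, φ, hgal, hφ, hGH⟩ := hadm u' w' huw'
  have hji := j.isLt
  by_cases hcase : ∀ k k' : Fin M,
      ((i : ℕ) ≤ (φ k : ℕ) ∧ (φ k : ℕ) ≤ (j : ℕ)) →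
      ((i : ℕ) ≤ (φ k' : ℕ) ∧ (φ k' : ℕ) ≤ (j : ℕ)) → k = k'
  · -- at most one crossing lies in the flipped block: adjust indices pointwise
    refine ⟨M, G, e, fun k =>
      if h : (i : ℕ) ≤ (φ k : ℕ) ∧ (φ k : ℕ) ≤ (j : ℕ) then
        ⟨(i : ℕ) + (j : ℕ) - (φ k : ℕ), by omega⟩ else φ k, hgal, ?_, ?_⟩
    · intro k k' hkk'
      have hlt : (φ k : ℕ) < (φ k' : ℕ) := hφ hkk'
      dsimp only
      rw [Fin.lt_def]
      split_ifs with h1 h2 h2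
      · exact absurd (hcase k k' h1 h2) (ne_of_lt hkk')
      · simp only [Fin.lt_def] at *
        omega
      · simp only [Fin.lt_def] at *
        omega
      · exact hlt
    · intro k
      dsimp only
      by_cases h : (i : ℕ) ≤ (φ k : ℕ) ∧ (φ k : ℕ) ≤ (j : ℕ)
      · rw [dif_pos h, dif_pos (by simp only [Fin.val_mk]; omega)]
        rw [hGH k]
        exact congrArg H (Fin.ext (by simp only [Fin.val_mk]; omega))
      · rw [dif_neg h, dif_neg h]
        exact hGH k
  · -- two crossings in the block: the whole localization is `loc A u w`
    push_neg at hcase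
    obtain ⟨k₀, k₁, h0in, h1in, hne01⟩ := hcase
    have hGloc : ∀ k, G k ∈ loc A u' w' := by
      intro k
      have h1 := hgal.2.2.2 k
      have h2 : G k ∈ SepSet (loc A u' w') (e k.castSucc) (e k.succ) := by
        rw [h1]; exact Finset.mem_singleton_self _
      exact (Finset.mem_filter.mp h2).1
    have hlocA : ∀ v ∈ loc A u' w', v ∈ A := fun v hv => (Finset.mem_filter.mp hv).1
    have hlocP : ∀ {a b : V n} {v : V n}, v ∈ loc A a b →
        ∀ x, a ⬝ᵥ x = 0 → b ⬝ᵥ x = 0 → v ⬝ᵥ x = 0 :=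
      fun hv => (Finset.mem_filter.mp hv).2
    -- the two distinguished crossings
    set v1 := G k₀ with hv1
    set v2 := G k₁ with hv2
    have hne : v1 ≠ v2 := by
      rw [hv1, hv2, hGH k₀, hGH k₁]
      intro hEq
      exact hne01 (hφ.injective (hinj hEq))
    have h1A : v1 ∈ A := hlocA _ (hGloc k₀)
    have h2A : v2 ∈ A := hlocA _ (hGloc k₁)
    have h1uw : v1 ∈ loc A u w := by
      rw [hv1, hGH k₀]; exact (hcontig (φ k₀)).mpr h0in
    have h2uw : v2 ∈ loc A u w := by
      rw [hv2, hGH k₁]; exact (hcontig (φ k₁)).mpr h1in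
    have hli : LinearIndependent ℝ ![v1, v2] := by
      rw [LinearIndependent.pair_iff]
      intro s t hst
      by_cases ht : t = 0
      · subst ht
        rw [zero_smul, add_zero, smul_eq_zero] at hst
        rcases hst with hs | h0
        · exact ⟨hs, rfl⟩
        · exact absurd h0 (hA.1 _ h1A)
      · exfalso
        have hv2eq : v2 = (-s / t) • v1 := by
          have h1 : t • v2 = (-s) • v1 := by
            rw [neg_smul]
            rw [add_comm, add_eq_zero_iff_eq_neg] at hst
            exact hst
          calc v2 = t⁻¹ • (t • v2) := by rw [smul_smul, inv_mul_cancel₀ ht, one_smul]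
            _ = t⁻¹ • ((-s) • v1) := by rw [h1]
            _ = (-s / t) • v1 := by rw [smul_smul, div_eq_mul_inv, mul_comm]
        have hc : (-s / t) ≠ 0 := by
          intro h0
          rw [h0, zero_smul] at hv2eq
          exact hA.1 _ h2A hv2eq
        have hsh : SameHyp v1 v2 := by
          intro x
          rw [hv2eq, smul_dotProduct, smul_eq_mul, mul_eq_zero]
          constructor
          · intro h; right; exact h
          · rintro (h | h)
            · exact absurd h hc
            · exact h
        exact hne (hA.2 _ h1A _ h2A hsh)
    have hspan : Submodule.span ℝ ({u', w'} : Set (V n)) ≤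
        Submodule.span ℝ ({v1, v2} : Set (V n)) :=
      span_pair_le_span_pair _ _ _ _ hli
        (mem_span_pair_of_ker _ _ _ (hlocP (hGloc k₀)))
        (mem_span_pair_of_ker _ _ _ (hlocP (hGloc k₁)))
    have hsub : ∀ v ∈ loc A u' w', v ∈ loc A u w := by
      intro v hv
      have hvs : v ∈ Submodule.span ℝ ({v1, v2} : Set (V n)) :=
        hspan (mem_span_pair_of_ker _ _ _ (hlocP hv))
      have hvs2 : v ∈ Submodule.span ℝ ({u, w} : Set (V n)) := by
        refine Submodule.span_le.mpr ?_ hvs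
        rintro y (rfl | rfl)
        · exact mem_span_pair_of_ker _ _ _ (hlocP h1uw)
        · exact mem_span_pair_of_ker _ _ _ (hlocP h2uw)
      exact Finset.mem_filter.mpr ⟨hlocA _ hv, dot_eq_zero_of_mem_span hvs2⟩
    have hrange : ∀ k, (i : ℕ) ≤ (φ k : ℕ) ∧ (φ k : ℕ) ≤ (j : ℕ) := by
      intro k
      refine (hcontig (φ k)).mp ?_
      rw [← hGH k]
      exact hsub _ (hGloc k)
    refine ⟨M, fun k => G k.rev,
      fun k v => if v ∈ loc A u' w' then !(e k.rev v) else c₀ v,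
      fun k => ⟨(i : ℕ) + (j : ℕ) - (φ k.rev : ℕ), by have := hrange k.rev; omega⟩,
      gallery_rev _ _ _ _ hgal, ?_, ?_⟩
    · intro k k' hkk'
      have hrev : k'.rev < k.rev := Fin.rev_lt_rev.mpr hkk'
      have hlt : (φ k'.rev : ℕ) < (φ k.rev : ℕ) := hφ hrev
      have h1 := hrange k.rev
      have h2 := hrange k'.rev
      rw [Fin.lt_def]
      first
      | (simp only [Fin.val_mk]; omega)
      | omega
    · intro k
      have h1 := hrange k.rev
      dsimp only
      rw [dif_pos (by first | (simp only [Fin.val_mk]; omega) | omega)]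
      rw [hGH k.rev]
      exact congrArg H (Fin.ext (by first | (simp only [Fin.val_mk]; omega) | omega))
end
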